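/- Shuffle relation: let φ₁, …, φ_{m+n} : [0,1] → ℂ be continuous functions. Then (∫_{0≤t₁≤⋯≤t_m≤1} ∏_{i=1}^m φ_i(t_i) dt)·(∫_{0≤s₁≤⋯≤s_n≤1} ∏_{j=1}^n φ_{m+j}(s_j) ds) = ∑_S ∫_{0≤u₁≤⋯≤u_{m+n}≤1} ∏_{i=1}^{m+n} φ_{τ_S(i)}(u_i) du, where the sum is over all m-element subsets S ⊆ {1,…,m+n} and τ_S : {1,…,m+n} → {1,…,m+n} is the bijection placing φ₁,…,φ_m (in this order) in the positions of S and φ_{m+1},…,φ_{m+n} (in this order) in the positions of the complement of S. Equivalently, the sum ranges over all (m,n)-shuffles. -/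

import Mathlib

open MeasureTheory

/-- The simplex `{0 ≤ t 1 ≤ ⋯ ≤ t k ≤ 1}` in `[0,1]^k`. -/
def orderedSimplex (k : ℕ) : Set (Fin k → ℝ) :=
  {t | (∀ i, t i ∈ Set.Icc (0 : ℝ) 1) ∧ ∀ i j : Fin k, i ≤ j → t i ≤ t j}

/-- The integral `∫_{0 ≤ t₁ ≤ ⋯ ≤ t_k ≤ 1} ∏_{i} φ_i(t_i) dt` over the simplex. -/
noncomputable def simplexIntegral (k : ℕ) (φ : Fin k → ℝ → ℂ) : ℂ :=
  ∫ t in orderedSimplex k, ∏ i, φ i (t i)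

/-- `σ` is an `(m,n)`-shuffle of `Fin (m+n)`: it is strictly increasing on the first `m`
indices and on the last `n` indices.  (`σ i` is the position into which the `i`-th
function is placed; the set `S` of the statement is the image of the first `m` indices.) -/
def IsShuffle (m n : ℕ) (σ : Equiv.Perm (Fin (m + n))) : Prop :=
  (∀ i j : Fin (m + n), i < j → (j : ℕ) < m → σ i < σ j) ∧
  (∀ i j : Fin (m + n), i < j → m ≤ (i : ℕ) → σ i < σ j)

namespace ShuffleAux

variable {k : ℕ}

/-- The unit cube. -/
def cube (k : ℕ) : Set (Fin k → ℝ) := {t | ∀ i, t i ∈ Set.Icc (0 : ℝ) 1}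

lemma isClosed_cube : IsClosed (cube k) := by
  have : cube k = ⋂ i, (fun t : Fin k → ℝ => t i) ⁻¹' Set.Icc (0 : ℝ) 1 := by
    ext t; simp [cube]
  rw [this]
  exact isClosed_iInter fun i => isClosed_Icc.preimage (continuous_apply i)

lemma isCompact_cube : IsCompact (cube k) := by
  have : cube k = Set.pi Set.univ (fun _ : Fin k => Set.Icc (0 : ℝ) 1) := by
    ext t
    simp only [cube, Set.mem_setOf_eq, Set.mem_pi, Set.mem_univ, forall_true_left]
  rw [this]
  exact isCompact_univ_pi fun _ => isCompact_Icc

/-- The region in the cube attached to a permutation `σ`: coordinates are ordered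
according to `σ`. -/
def region (σ : Equiv.Perm (Fin k)) : Set (Fin k → ℝ) :=
  {t | (∀ i, t i ∈ Set.Icc (0 : ℝ) 1) ∧ ∀ a b : Fin k, σ a ≤ σ b → t a ≤ t b}

lemma region_subset_cube (σ : Equiv.Perm (Fin k)) : region σ ⊆ cube k := fun _ ht => ht.1

lemma isClosed_region (σ : Equiv.Perm (Fin k)) : IsClosed (region σ) := by
  have : region σ = cube k ∩ ⋂ (a) (b) (_ : σ a ≤ σ b), {t : Fin k → ℝ | t a ≤ t b} := by
    ext t; simp only [region, cube, Set.mem_inter_iff, Set.mem_iInter, Set.mem_setOf_eq]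
  rw [this]
  exact isClosed_cube.inter <| isClosed_iInter fun a => isClosed_iInter fun b =>
    isClosed_iInter fun _ => isClosed_le (continuous_apply a) (continuous_apply b)

lemma continuousOn_prodfun (φ : Fin k → ℝ → ℂ) (hφ : ∀ i, ContinuousOn (φ i) (Set.Icc 0 1)) :
    ContinuousOn (fun t : Fin k → ℝ => ∏ j, φ j (t j)) (cube k) := by
  apply continuousOn_finset_prod
  intro i _
  exact (hφ i).comp (continuous_apply i).continuousOn (fun t ht => ht i)

lemma integrableOn_prodfun (φ : Fin k → ℝ → ℂ) (hφ : ∀ i, ContinuousOn (φ i) (Set.Icc 0 1))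
    {A : Set (Fin k → ℝ)} (hA : IsClosed A) (hsub : A ⊆ cube k) :
    IntegrableOn (fun t => ∏ j, φ j (t j)) A := by
  have hc : IsCompact A := isCompact_cube.of_isClosed_subset hA hsub
  exact ((continuousOn_prodfun φ hφ).mono hsub).integrableOn_compact hc

/-- hyperplanes are null -/
lemma null_hyperplane (a b : Fin k) (h : a ≠ b) :
    volume {t : Fin k → ℝ | t a = t b} = 0 := by
  have : {t : Fin k → ℝ | t a = t b} =
      (LinearMap.ker ((LinearMap.proj a : (Fin k → ℝ) →ₗ[ℝ] ℝ) - LinearMap.proj b) :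
        Set (Fin k → ℝ)) := by
    ext t
    simp [LinearMap.sub_apply, sub_eq_zero, LinearMap.mem_ker]
  rw [this]
  apply Measure.addHaar_submodule
  intro htop
  have h1 : (Pi.single a 1 : Fin k → ℝ) ∈
      LinearMap.ker ((LinearMap.proj a : (Fin k → ℝ) →ₗ[ℝ] ℝ) - LinearMap.proj b) :=
    htop ▸ Submodule.mem_top
  simp [LinearMap.mem_ker, LinearMap.sub_apply, Pi.single_apply, h, h.symm] at h1

lemma null_noninjective : volume {t : Fin k → ℝ | ¬ Function.Injective t} = 0 := by
  have hsub : {t : Fin k → ℝ | ¬ Function.Injective t} ⊆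
      ⋃ (a : Fin k) (b : Fin k) (_ : a ≠ b), {t : Fin k → ℝ | t a = t b} := by
    intro t ht
    simp only [Function.Injective, not_forall] at ht
    obtain ⟨a, b, hab, hne⟩ := ht
    exact Set.mem_iUnion.2 ⟨a, Set.mem_iUnion.2 ⟨b, Set.mem_iUnion.2 ⟨hne, hab⟩⟩⟩
  refine measure_mono_null hsub ?_
  refine measure_iUnion_null fun a => measure_iUnion_null fun b => measure_iUnion_null fun h =>
    null_hyperplane a b h

/-- distinct permutations have a discordant pair -/
lemma exists_discordant {σ τ : Equiv.Perm (Fin k)} (h : σ ≠ τ) :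
    ∃ a b, σ a < σ b ∧ τ b < τ a := by
  by_contra hcon
  have hmono : StrictMono (fun x => τ (σ.symm x)) := by
    intro x y hxy
    rcases lt_trichotomy (τ (σ.symm x)) (τ (σ.symm y)) with hlt | heq | hgt
    · exact hlt
    · exact absurd (by simpa using congrArg σ (τ.injective heq)) hxy.ne
    · exact absurd ⟨σ.symm x, σ.symm y, by simpa using hxy, hgt⟩ hcon
  have hid : (fun x => τ (σ.symm x)) = id := by
    have inst : WellFoundedLT (Fin k) := inferInstance
    refine (@StrictMono.range_inj (Fin k) (Fin k) _ _ inst _ id hmono strictMono_id).1 ?_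
    have hsurj : Function.Surjective (fun x => τ (σ.symm x)) :=
      τ.surjective.comp σ.symm.surjective
    simp [Set.range_eq_univ.2 hsurj]
  apply h
  apply Equiv.ext
  intro a
  have := congrFun hid (σ a)
  simp only [Equiv.symm_apply_apply, id_eq] at this
  exact this.symm

/-- regions of distinct permutations intersect in a null set -/
lemma null_region_inter {σ τ : Equiv.Perm (Fin k)} (h : σ ≠ τ) :
    volume (region σ ∩ region τ) = 0 := by
  obtain ⟨a, b, h1, h2⟩ := exists_discordant h
  have hsub : region σ ∩ region τ ⊆ {t : Fin k → ℝ | t a = t b} := by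
    rintro t ⟨hσ, hτ⟩
    exact le_antisymm (hσ.2 a b h1.le) (hτ.2 b a h2.le)
  exact measure_mono_null hsub (null_hyperplane a b (fun hab => absurd (hab ▸ h1) (lt_irrefl _)))

/-- each term on the RHS is the integral over the corresponding region -/
lemma rhs_eq (φ : Fin k → ℝ → ℂ) (σ : Equiv.Perm (Fin k)) :
    simplexIntegral k (fun i => φ (σ.symm i)) = ∫ t in region σ, ∏ j, φ j (t j) := by
  set e := MeasurableEquiv.piCongrLeft (fun _ : Fin k => ℝ) σ with he
  have happ : ∀ (t : Fin k → ℝ) (i : Fin k), e t i = t (σ.symm i) := by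
    intro t i
    have := Equiv.piCongrLeft_apply_apply (fun _ : Fin k => ℝ) σ t (σ.symm i)
    simpa [he, MeasurableEquiv.piCongrLeft] using this
  have hmp : MeasurePreserving e volume volume := by
    simpa [volume_pi] using measurePreserving_piCongrLeft (fun _ : Fin k => (volume : Measure ℝ)) σ
  have key := hmp.setIntegral_preimage_emb e.measurableEmbedding
    (fun u => ∏ i, φ (σ.symm i) (u i)) (orderedSimplex k)
  have hpre : e ⁻¹' orderedSimplex k = region σ := by
    ext t
    simp only [Set.mem_preimage, orderedSimplex, region, Set.mem_setOf_eq, happ]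
    constructor
    · rintro ⟨h1, h2⟩
      refine ⟨fun i => by simpa using h1 (σ i), fun a b hab => ?_⟩
      simpa using h2 (σ a) (σ b) hab
    · rintro ⟨h1, h2⟩
      exact ⟨fun i => h1 _, fun i j hij =>
        h2 (σ.symm i) (σ.symm j) (by simpa using hij)⟩
  rw [simplexIntegral, ← key, hpre]
  refine integral_congr_ae (Filter.Eventually.of_forall fun t => ?_)
  simp only [happ]
  exact Equiv.prod_comp σ.symm (fun j => φ j (t j))


/-- The set `B`: both blocks are chains inside the cube. -/
def Bset (m n : ℕ) : Set (Fin (m + n) → ℝ) :=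
  {t | (∀ i, t i ∈ Set.Icc (0 : ℝ) 1) ∧
    (∀ i j : Fin m, i ≤ j → t (Fin.castAdd n i) ≤ t (Fin.castAdd n j)) ∧
    (∀ i j : Fin n, i ≤ j → t (Fin.natAdd m i) ≤ t (Fin.natAdd m j))}

lemma isClosed_Bset (m n : ℕ) : IsClosed (Bset m n) := by
  have hrw : Bset m n = cube (m + n) ∩
      ((⋂ (i : Fin m) (j : Fin m) (_ : i ≤ j),
        {t : Fin (m + n) → ℝ | t (Fin.castAdd n i) ≤ t (Fin.castAdd n j)}) ∩
      ⋂ (i : Fin n) (j : Fin n) (_ : i ≤ j),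
        {t : Fin (m + n) → ℝ | t (Fin.natAdd m i) ≤ t (Fin.natAdd m j)}) := by
    ext t
    simp only [Bset, cube, Set.mem_inter_iff, Set.mem_iInter, Set.mem_setOf_eq]
  rw [hrw]
  refine isClosed_cube.inter (IsClosed.inter ?_ ?_)
  · exact isClosed_iInter fun i => isClosed_iInter fun j => isClosed_iInter fun _ =>
      isClosed_le (continuous_apply (Fin.castAdd n i)) (continuous_apply (Fin.castAdd n j))
  · exact isClosed_iInter fun i => isClosed_iInter fun j => isClosed_iInter fun _ =>
      isClosed_le (continuous_apply (Fin.natAdd m i)) (continuous_apply (Fin.natAdd m j))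

/-- The measurable equivalence splitting `[0,1]^{m+n}` as a product. -/
noncomputable def prodEquiv (m n : ℕ) : ((Fin (m + n)) → ℝ) ≃ᵐ ((Fin m → ℝ) × (Fin n → ℝ)) :=
  ((MeasurableEquiv.piCongrLeft (fun _ => ℝ) finSumFinEquiv).symm).trans
    (MeasurableEquiv.sumPiEquivProdPi (fun _ => ℝ))

lemma prodEquiv_apply (m n : ℕ) (t : Fin (m + n) → ℝ) :
    prodEquiv m n t = (fun i => t (Fin.castAdd n i), fun j => t (Fin.natAdd m j)) := by
  ext j <;> simp [prodEquiv, MeasurableEquiv.sumPiEquivProdPi, MeasurableEquiv.piCongrLeft,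
    Equiv.piCongrLeft_symm_apply]

lemma measurePreserving_prodEquiv (m n : ℕ) :
    MeasurePreserving (prodEquiv m n) volume ((volume : Measure (Fin m → ℝ)).prod volume) := by
  have h1 := (measurePreserving_piCongrLeft (fun _ : Fin (m + n) => (volume : Measure ℝ))
    finSumFinEquiv).symm
  have h2 := measurePreserving_sumPiEquivProdPi (fun _ : Fin m ⊕ Fin n => (volume : Measure ℝ))
  have h3 := h2.comp h1
  simpa [volume_pi, prodEquiv, MeasurableEquiv.coe_trans] using h3

lemma lhs_eq (m n : ℕ) (φ : Fin (m + n) → ℝ → ℂ) :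
    simplexIntegral m (fun i => φ (Fin.castAdd n i)) *
      simplexIntegral n (fun j => φ (Fin.natAdd m j)) =
    ∫ t in Bset m n, ∏ j, φ j (t j) := by
  rw [simplexIntegral, simplexIntegral, ← setIntegral_prod_mul]
  have key := (measurePreserving_prodEquiv m n).setIntegral_preimage_emb
    (prodEquiv m n).measurableEmbedding
    (fun z : (Fin m → ℝ) × (Fin n → ℝ) =>
      (∏ i, φ (Fin.castAdd n i) (z.1 i)) * ∏ j, φ (Fin.natAdd m j) (z.2 j))
    (orderedSimplex m ×ˢ orderedSimplex n)
  rw [← key]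
  have hpre : (prodEquiv m n) ⁻¹' (orderedSimplex m ×ˢ orderedSimplex n) = Bset m n := by
    ext t
    simp only [Set.mem_preimage, prodEquiv_apply, Set.mem_prod, orderedSimplex, Bset,
      Set.mem_setOf_eq]
    constructor
    · rintro ⟨⟨hc1, hm1⟩, ⟨hc2, hm2⟩⟩
      exact ⟨fun i => Fin.addCases (fun i => hc1 i) (fun j => hc2 j) i, hm1, hm2⟩
    · rintro ⟨hc, hm1, hm2⟩
      exact ⟨⟨fun i => hc _, hm1⟩, ⟨fun j => hc _, hm2⟩⟩
  rw [hpre]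
  refine integral_congr_ae (Filter.Eventually.of_forall fun t => ?_)
  simp only [prodEquiv_apply]
  exact (Fin.prod_univ_add (f := fun j => φ j (t j))).symm

end ShuffleAux

open ShuffleAux

theorem shuffle_relation (m n : ℕ) [DecidablePred (IsShuffle m n)] (φ : Fin (m + n) → ℝ → ℂ)
    (hφ : ∀ i, ContinuousOn (φ i) (Set.Icc 0 1)) :
    simplexIntegral m (fun i => φ (Fin.castAdd n i)) *
      simplexIntegral n (fun j => φ (Fin.natAdd m j)) =
    ∑ σ ∈ Finset.univ.filter (fun σ => IsShuffle m n σ),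
      simplexIntegral (m + n) (fun i => φ (σ.symm i)) := by
  classical
  set f : (Fin (m + n) → ℝ) → ℂ := fun t => ∏ j, φ j (t j) with hf
  set B : Set (Fin (m + n) → ℝ) := Bset m n with hB
  have step1 : simplexIntegral m (fun i => φ (Fin.castAdd n i)) *
      simplexIntegral n (fun j => φ (Fin.natAdd m j)) = ∫ t in B, f t :=
    lhs_eq m n φ
  -- Step 2 : shuffles: regions inside B
  have region_sub : ∀ σ : Equiv.Perm (Fin (m + n)), IsShuffle m n σ → region σ ⊆ B := by
    intro σ hσ t ht
    refine ⟨ht.1, fun i j hij => ?_, fun i j hij => ?_⟩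
    · rcases eq_or_lt_of_le hij with rfl | hlt
      · exact le_refl _
      · refine ht.2 _ _ (le_of_lt (hσ.1 _ _ ?_ ?_)) <;>
          simp [Fin.lt_iff_val_lt_val, Fin.le_iff_val_le_val, Fin.lt_iff_val_lt_val.1 hlt, j.isLt]
    · rcases eq_or_lt_of_le hij with rfl | hlt
      · exact le_refl _
      · refine ht.2 _ _ (le_of_lt (hσ.2 _ _ ?_ ?_)) <;>
          simp [Fin.lt_iff_val_lt_val, Fin.le_iff_val_le_val, Fin.lt_iff_val_lt_val.1 hlt]
  -- Step 3 : coverage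
  have coverage : ∀ t ∈ B, Function.Injective t →
      ∃ σ : Equiv.Perm (Fin (m + n)), IsShuffle m n σ ∧ t ∈ region σ := by
    intro t ht hinj
    set s := Tuple.sort t with hs
    set σ : Equiv.Perm (Fin (m + n)) := s⁻¹ with hσ
    have hg : StrictMono (t ∘ s) :=
      (Tuple.monotone_sort t).strictMono_of_injective (hinj.comp s.injective)
    have hts : ∀ a : Fin (m + n), (t ∘ s) (σ a) = t a := by
      intro a; simp [hσ, Function.comp]
    have hiff : ∀ a b, σ a ≤ σ b ↔ t a ≤ t b := by
      intro a b
      rw [← hts a, ← hts b]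
      exact ⟨fun h => hg.monotone h, fun h => (hg.le_iff_le).1 h⟩
    have hiff' : ∀ a b, σ a < σ b ↔ t a < t b := by
      intro a b
      rw [← hts a, ← hts b]
      exact ⟨fun h => hg h, fun h => hg.lt_iff_lt.1 h⟩
    refine ⟨σ, ⟨fun i j hij hjm => ?_, fun i j hij him => ?_⟩,
      ⟨ht.1, fun a b hab => (hiff a b).1 hab⟩⟩
    · -- first block
      have him : (i : ℕ) < m := lt_trans (Fin.lt_iff_val_lt_val.1 hij) hjm
      have hijn : (i : ℕ) < (j : ℕ) := Fin.lt_iff_val_lt_val.1 hij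
      have hle : t i ≤ t j := by
        have h := ht.2.1 (⟨(i : ℕ), him⟩ : Fin m) (⟨(j : ℕ), hjm⟩ : Fin m)
          (Fin.mk_le_mk.2 hijn.le)
        have e1 : Fin.castAdd n (⟨(i : ℕ), him⟩ : Fin m) = i := by ext; simp
        have e2 : Fin.castAdd n (⟨(j : ℕ), hjm⟩ : Fin m) = j := by ext; simp
        rwa [e1, e2] at h
      exact (hiff' i j).2 (lt_of_le_of_ne hle (fun h => absurd (hinj h) hij.ne))
    · -- second block
      have hijn : (i : ℕ) < (j : ℕ) := Fin.lt_iff_val_lt_val.1 hij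
      have hjm : m ≤ (j : ℕ) := le_trans him hijn.le
      have hle : t i ≤ t j := by
        have h1 : (i : ℕ) - m < n := by have := i.isLt; omega
        have h2 : (j : ℕ) - m < n := by have := j.isLt; omega
        have h := ht.2.2 (⟨(i : ℕ) - m, h1⟩ : Fin n) (⟨(j : ℕ) - m, h2⟩ : Fin n)
          (Fin.mk_le_mk.2 (by omega))
        have e1 : Fin.natAdd m (⟨(i : ℕ) - m, h1⟩ : Fin n) = i := by
          ext; simp only [Fin.coe_natAdd]; omega
        have e2 : Fin.natAdd m (⟨(j : ℕ) - m, h2⟩ : Fin n) = j := by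
          ext; simp only [Fin.coe_natAdd]; omega
        rwa [e1, e2] at h
      exact (hiff' i j).2 (lt_of_le_of_ne hle (fun h => absurd (hinj h) hij.ne))
  -- Step 4 : assemble
  have hUnion : ∫ t in B, f t =
      ∑ σ ∈ Finset.univ.filter (fun σ => IsShuffle m n σ), ∫ t in region σ, f t := by
    set U : Set (Fin (m + n) → ℝ) :=
      ⋃ σ : {σ : Equiv.Perm (Fin (m + n)) // IsShuffle m n σ}, region σ.1 with hU
    have hUB : U ⊆ B := Set.iUnion_subset fun σ => region_sub σ.1 σ.2
    have hBclosed : IsClosed B := isClosed_Bset m n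
    have hBU : B =ᵐ[volume] U := by
      rw [MeasureTheory.ae_eq_set]
      constructor
      · refine measure_mono_null ?_ (null_noninjective (k := m + n))
        intro t ⟨htB, htU⟩
        simp only [Set.mem_setOf_eq]
        intro hinj
        obtain ⟨σ, hσ, hreg⟩ := coverage t htB hinj
        exact htU (Set.mem_iUnion.2 ⟨⟨σ, hσ⟩, hreg⟩)
      · rw [Set.diff_eq_empty.2 hUB]; simp
    have hint : ∀ σ : {σ : Equiv.Perm (Fin (m + n)) // IsShuffle m n σ},
        IntegrableOn f (region σ.1) volume :=
      fun σ => integrableOn_prodfun φ hφ (isClosed_region σ.1) (region_subset_cube σ.1)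
    calc ∫ t in B, f t = ∫ t in U, f t := setIntegral_congr_set hBU
      _ = ∑' σ : {σ : Equiv.Perm (Fin (m + n)) // IsShuffle m n σ},
            ∫ t in region σ.1, f t := by
          rw [hU]
          exact integral_iUnion_ae
            (fun σ => ((isClosed_region σ.1).measurableSet).nullMeasurableSet)
            (fun σ τ hne => null_region_inter (fun h => hne (Subtype.ext h)))
            ((integrableOn_finite_iUnion).2 hint)
      _ = ∑ σ : {σ : Equiv.Perm (Fin (m + n)) // IsShuffle m n σ},
            ∫ t in region σ.1, f t := tsum_fintype _
      _ = ∑ σ ∈ Finset.univ.filter (fun σ => IsShuffle m n σ), ∫ t in region σ, f t :=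
          (Finset.sum_subtype _ (by simp) (fun σ => ∫ t in region σ, f t)).symm
  rw [step1, hUnion]
  exact Finset.sum_congr rfl fun σ hσ => (rhs_eq φ σ).symm
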